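/- Let K be a field, let m, n, d be natural numbers with d ≥ 1, and let A be an m × n matrix over K such that no row of A is zero and every column of A has at most d nonzero entries. Then m ≤ d · rank(A). -/

import Mathlib

open Module Submodule

open scoped Classical in
private lemma greedy_aux {K : Type*} [Field K] {n d : ℕ} {ι : Type*} [DecidableEq ι]
    (A : ι → Fin n → K) :
    ∀ s : Finset ι, (∀ i ∈ s, A i ≠ 0) →
      (∀ j : Fin n, (s.filter (fun i => A i j ≠ 0)).card ≤ d) →
      s.card ≤ d * finrank K (span K (A '' ↑s)) := by
  classical
  intro s
  induction s using Finset.strongInductionOn with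
  | _ s ih =>
    intro hrow hcol
    rcases s.eq_empty_or_nonempty with rfl | ⟨i0, hi0⟩
    · simp
    obtain ⟨j, hj⟩ : ∃ j, A i0 j ≠ 0 := by
      by_contra h
      push_neg at h
      exact hrow i0 hi0 (funext h)
    set t : Finset ι := s.filter (fun i => A i j = 0) with ht
    have hts : t ⊂ s := by
      refine Finset.ssubset_iff_of_subset (Finset.filter_subset _ _) |>.mpr ⟨i0, hi0, ?_⟩
      simp [ht, hj]
    have h1 := ih t hts (fun i hi => hrow i (Finset.mem_of_subset hts.subset hi))
      (fun j' => le_trans (Finset.card_le_card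
        (Finset.filter_subset_filter _ hts.subset)) (hcol j'))
    -- strict submodule
    have hle : span K (A '' ↑t) ≤ span K (A '' ↑s) :=
      span_mono (Set.image_mono (by exact_mod_cast hts.subset))
    have hmem : A i0 ∈ span K (A '' ↑s) :=
      subset_span ⟨i0, by simpa using hi0, rfl⟩
    have hnmem : A i0 ∉ span K (A '' ↑t) := by
      intro hmem'
      have hker : span K (A '' ↑t) ≤ LinearMap.ker (LinearMap.proj (R := K) (φ := fun _ : Fin n => K) j) := by
        rw [span_le]
        rintro x ⟨i, hi, rfl⟩
        simp only [SetLike.mem_coe, LinearMap.mem_ker, LinearMap.proj_apply]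
        exact (Finset.mem_filter.mp hi).2
      exact hj (hker hmem')
    have hlt : span K (A '' ↑t) < span K (A '' ↑s) :=
      lt_of_le_of_ne hle (fun h => hnmem (h ▸ hmem))
    have hrk : finrank K (span K (A '' ↑t)) < finrank K (span K (A '' ↑s)) :=
      Submodule.finrank_lt_finrank_of_lt hlt
    have hcard : t.card + (s.filter (fun i => ¬ A i j = 0)).card = s.card :=
      Finset.card_filter_add_card_filter_not _
    have h2 : (s.filter (fun i => ¬ A i j = 0)).card ≤ d := by
      simpa using hcol j
    calc s.card = t.card + (s.filter (fun i => ¬ A i j = 0)).card := hcard.symm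
      _ ≤ d * finrank K (span K (A '' ↑t)) + d := by omega
      _ = d * (finrank K (span K (A '' ↑t)) + 1) := by ring
      _ ≤ d * finrank K (span K (A '' ↑s)) := Nat.mul_le_mul_left d (by omega)

/-- Linear-algebraic core of the rank lower bound for the line–face incidence
matrix of a stranded graph: if no row of an `m × n` matrix over a field is
zero and every column has at most `d ≥ 1` nonzero entries, then
`m ≤ d · rank(A)`. -/
theorem row_count_le_mul_rank
    {K : Type*} [Field K] (m n d : ℕ) (hd : 1 ≤ d)
    (A : Matrix (Fin m) (Fin n) K)
    (hrow : ∀ i : Fin m, A i ≠ 0)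
    (hcol : ∀ j : Fin n, {i : Fin m | A i j ≠ 0}.ncard ≤ d) :
    m ≤ d * A.rank := by
  classical
  have h := greedy_aux (A : Fin m → Fin n → K) Finset.univ
    (fun i _ => hrow i)
    (fun j => by
      have := hcol j
      rwa [Set.ncard_eq_toFinset_card', Set.toFinset_setOf] at this)
  rw [show (A '' ↑(Finset.univ : Finset (Fin m))) = Set.range A by
        rw [Finset.coe_univ]; exact Set.image_univ] at h
  rw [Matrix.rank_eq_finrank_span_row]
  simp at h
  exact h
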